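/- Let M be a matroid with finite ground set, let r = rank(M) ≥ 1, and let k ≥ 0 be an integer. If B is a k-fault-tolerant basis of M (i.e., B is k-fault-tolerant spanning and has minimum cardinality among all k-fault-tolerant spanning sets of M), then r + k ≤ |B| ≤ (k+1)·r. -/

import Mathlib

open Set

/-- The rank of a set `X` in a matroid `M`: the maximum cardinality of an
independent subset of `X`. -/
noncomputable def mrank {α : Type*} (M : Matroid α) (X : Set α) : ℕ :=
  sSup {n : ℕ | ∃ I, M.Indep I ∧ I ⊆ X ∧ I.ncard = n}

/-- `B` is a `k`-fault-tolerant spanning set of `M`: `B ⊆ M.E` and removing any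
at most `k` elements from `B` leaves a set of full rank. -/
def FTSpanning {α : Type*} (M : Matroid α) (k : ℕ) (B : Set α) : Prop :=
  B ⊆ M.E ∧ ∀ F ⊆ B, F.ncard ≤ k → mrank M (B \ F) = mrank M M.E

/-- `B` is a `k`-fault-tolerant basis of `M`: a `k`-fault-tolerant spanning set of
minimum cardinality among all `k`-fault-tolerant spanning sets. -/
def FTBasis {α : Type*} (M : Matroid α) (k : ℕ) (B : Set α) : Prop :=
  FTSpanning M k B ∧ ∀ B', FTSpanning M k B' → B.ncard ≤ B'.ncard

/-- `X` is `h`-uniform in `M`: `rank(X) = h` and every subset of `X` of size `h`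
has rank `h`. -/
def HUniform {α : Type*} (M : Matroid α) (h : ℕ) (X : Set α) : Prop :=
  mrank M X = h ∧ ∀ Y ⊆ X, Y.ncard = h → mrank M Y = h

section Aux

variable {α : Type*} {M : Matroid α}

lemma mrank_set_nonempty (M : Matroid α) (X : Set α) :
    {n : ℕ | ∃ I, M.Indep I ∧ I ⊆ X ∧ I.ncard = n}.Nonempty :=
  ⟨0, ∅, M.empty_indep, empty_subset _, by simp⟩

lemma mrank_set_bddAbove (hE : M.E.Finite) (X : Set α) :
    BddAbove {n : ℕ | ∃ I, M.Indep I ∧ I ⊆ X ∧ I.ncard = n} := by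
  refine ⟨M.E.ncard, ?_⟩
  rintro n ⟨I, hI, -, rfl⟩
  exact Set.ncard_le_ncard hI.subset_ground hE

lemma mrank_eq_ncard_of_basis' (hE : M.E.Finite) {I X : Set α} (hI : M.IsBasis' I X) :
    mrank M X = I.ncard := by
  apply le_antisymm
  · apply csSup_le (mrank_set_nonempty M X)
    rintro n ⟨J, hJ, hJX, rfl⟩
    obtain ⟨I', hI', hJI'⟩ := hJ.subset_isBasis'_of_subset hJX
    have hcard : I'.ncard = I.ncard := by
      rw [Set.ncard_def, hI'.encard_eq_encard hI, ← Set.ncard_def]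
    have hI'fin : I'.Finite := hE.subset hI'.indep.subset_ground
    calc J.ncard ≤ I'.ncard := Set.ncard_le_ncard hJI' hI'fin
      _ = I.ncard := hcard
  · exact le_csSup (mrank_set_bddAbove hE X) ⟨I, hI.indep, hI.subset, rfl⟩

lemma mrank_mono (hE : M.E.Finite) {X Y : Set α} (hXY : X ⊆ Y) :
    mrank M X ≤ mrank M Y := by
  apply csSup_le_csSup (mrank_set_bddAbove hE Y) (mrank_set_nonempty M X)
  rintro n ⟨I, hI, hIX, rfl⟩
  exact ⟨I, hI, hIX.trans hXY, rfl⟩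

lemma mrank_le_ncard (hE : M.E.Finite) {X : Set α} (hX : X.Finite) :
    mrank M X ≤ X.ncard := by
  apply csSup_le (mrank_set_nonempty M X)
  rintro n ⟨I, hI, hIX, rfl⟩
  exact Set.ncard_le_ncard hIX hX

lemma mrank_closure_eq (hE : M.E.Finite) (X : Set α) :
    mrank M (M.closure X) = mrank M X := by
  obtain ⟨I, hI⟩ := M.exists_isBasis' X
  rw [mrank_eq_ncard_of_basis' hE hI,
    mrank_eq_ncard_of_basis' hE hI.isBasis_closure_right.isBasis']

lemma mrank_empty (hE : M.E.Finite) : mrank M (∅ : Set α) = 0 := by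
  have h : M.IsBasis' (∅ : Set α) ∅ := (M.empty_indep.isBasis_self).isBasis'
  rw [mrank_eq_ncard_of_basis' hE h, Set.ncard_empty]

lemma base_ncard (hE : M.E.Finite) {B : Set α} (hB : M.IsBase B) :
    B.ncard = mrank M M.E :=
  (mrank_eq_ncard_of_basis' hE hB.isBasis_ground.isBasis').symm

/-- Key construction: assuming every non-spanning closure misses at least `k+1`
elements of the ground set, one can build, for each `i ≤ k+1`, a set `S` of at
most `i * r` elements such that every non-spanning closure misses at least `i`
elements of `S`. -/
lemma exists_good (hE : M.E.Finite) (r k : ℕ) (hr : r = mrank M M.E)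
    (hyp : ∀ X ⊆ M.E, mrank M X < r → k + 1 ≤ (M.E \ M.closure X).ncard) :
    ∀ i, i ≤ k + 1 → ∃ S ⊆ M.E, S.ncard ≤ i * r ∧
      ∀ X ⊆ M.E, mrank M X < r → i ≤ (S \ M.closure X).ncard := by
  intro i
  induction i with
  | zero => exact fun _ => ⟨∅, empty_subset _, by simp, fun _ _ _ => Nat.zero_le _⟩
  | succ i ih =>
    intro hik
    obtain ⟨S, hSE, hScard, hSprop⟩ := ih (Nat.le_of_succ_le hik)
    obtain ⟨J, hJ⟩ := M.exists_isBasis (M.E \ S) diff_subset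
    obtain ⟨B₁, hB₁, hJB₁⟩ := hJ.indep.exists_isBase_superset
    refine ⟨S ∪ B₁, union_subset hSE hB₁.subset_ground, ?_, ?_⟩
    · calc (S ∪ B₁).ncard ≤ S.ncard + B₁.ncard := Set.ncard_union_le S B₁
        _ ≤ i * r + r := by
            have := base_ncard hE hB₁
            omega
        _ = (i + 1) * r := by ring
    · intro X hXE hX
      set H := M.closure X with hH
      have hSfin : (S \ H).Finite := (hE.subset hSE).diff (t := H)
      have hi : i ≤ (S \ H).ncard := hSprop X hXE hX
      have hSfin' : ((S ∪ B₁) \ H).Finite := (hE.subset (union_subset hSE hB₁.subset_ground)).diff (t := H)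
      by_cases hcase : i + 1 ≤ (S \ H).ncard
      · exact hcase.trans (Set.ncard_le_ncard (diff_subset_diff_left subset_union_left) hSfin')
      -- find an element of J outside H
      have hJH : ∃ x ∈ J, x ∉ H := by
        by_contra hcon
        push_neg at hcon
        have hJsub : J ⊆ H := hcon
        have hclJ : M.E \ S ⊆ M.closure J := hJ.subset_closure
        have hclH : M.closure J ⊆ H := by
          rw [hH]
          calc M.closure J ⊆ M.closure H := M.closure_subset_closure hJsub
            _ = M.closure X := by rw [hH, M.closure_closure]
        have hEH : M.E \ H ⊆ S \ H := by
          intro x hx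
          rcases hx with ⟨hxE, hxH⟩
          by_cases hxS : x ∈ S
          · exact ⟨hxS, hxH⟩
          · exact absurd (hclH (hclJ ⟨hxE, hxS⟩)) hxH
        have h1 : (M.E \ H).ncard ≤ (S \ H).ncard := Set.ncard_le_ncard hEH hSfin
        have h2 := hyp X hXE hX
        rw [← hH] at h2
        omega
      obtain ⟨x, hxJ, hxH⟩ := hJH
      have hxS : x ∉ S := (hJ.subset hxJ).2
      have hins : insert x (S \ H) ⊆ (S ∪ B₁) \ H := by
        rintro y (rfl | ⟨hyS, hyH⟩)
        · exact ⟨Or.inr (hJB₁ hxJ), hxH⟩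
        · exact ⟨Or.inl hyS, hyH⟩
      have hxnot : x ∉ S \ H := fun h => hxS h.1
      calc i + 1 ≤ (S \ H).ncard + 1 := by omega
        _ = (insert x (S \ H)).ncard := (Set.ncard_insert_of_notMem hxnot hSfin).symm
        _ ≤ ((S ∪ B₁) \ H).ncard := Set.ncard_le_ncard hins hSfin'

end Aux

/-- If `B` is a `k`-fault-tolerant basis of a matroid `M` with finite
ground set and rank `r ≥ 1`, then `r + k ≤ |B| ≤ (k+1)·r`. -/
theorem statement0 {α : Type*} (M : Matroid α) (hE : M.E.Finite)
    (r : ℕ) (hr : r = mrank M M.E) (hr1 : 1 ≤ r) (k : ℕ)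
    (B : Set α) (hB : FTBasis M k B) :
    r + k ≤ B.ncard ∧ B.ncard ≤ (k + 1) * r := by
  obtain ⟨⟨hBE, hspan⟩, hmin⟩ := hB
  have hBfin : B.Finite := hE.subset hBE
  constructor
  · -- lower bound
    by_cases hk : B.ncard ≤ k
    · exfalso
      have h := hspan B subset_rfl hk
      rw [Set.diff_self, mrank_empty hE] at h
      omega
    · push_neg at hk
      obtain ⟨F, hFB, hFcard⟩ := Set.exists_subset_card_eq (s := B) (n := k) hk.le
      have h := hspan F hFB hFcard.le
      have hle : mrank M (B \ F) ≤ (B \ F).ncard := mrank_le_ncard hE (hBfin.diff (t := F))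
      rw [h, ← hr] at hle
      rw [Set.ncard_diff hFB (hBfin.subset hFB), hFcard] at hle
      omega
  · -- upper bound
    have hyp : ∀ X ⊆ M.E, mrank M X < r → k + 1 ≤ (M.E \ M.closure X).ncard := by
      intro X hXE hX
      by_contra hcon
      push_neg at hcon
      set H := M.closure X with hH
      set F := B \ H with hF
      have hFB : F ⊆ B := diff_subset
      have hFsub : F ⊆ M.E \ H := fun x hx => ⟨hBE hx.1, hx.2⟩
      have hFk : F.ncard ≤ k := by
        have := Set.ncard_le_ncard hFsub (hE.diff (t := H))
        omega
      have h := hspan F hFB hFk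
      have hBFH : B \ F ⊆ H := by
        intro x hx
        by_contra hxH
        exact hx.2 ⟨hx.1, hxH⟩
      have h1 : mrank M (B \ F) ≤ mrank M H := mrank_mono hE hBFH
      rw [h, ← hr, hH, mrank_closure_eq hE] at h1
      omega
    obtain ⟨S, hSE, hScard, hSprop⟩ := exists_good hE r k hr hyp (k + 1) le_rfl
    have hSFT : FTSpanning M k S := by
      refine ⟨hSE, fun F hFS hFk => ?_⟩
      have hsub : S \ F ⊆ M.E := (diff_subset).trans hSE
      by_cases hlt : mrank M (S \ F) < r
      · exfalso
        have h := hSprop (S \ F) hsub hlt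
        have hsub2 : S \ M.closure (S \ F) ⊆ F := by
          intro x hx
          by_contra hxF
          exact hx.2 (M.subset_closure (S \ F) hsub ⟨hx.1, hxF⟩)
        have := Set.ncard_le_ncard hsub2 ((hE.subset hSE).subset hFS)
        omega
      · push_neg at hlt
        have hle : mrank M (S \ F) ≤ mrank M M.E := mrank_mono hE hsub
        omega
    calc B.ncard ≤ S.ncard := hmin S hSFT
      _ ≤ (k + 1) * r := hScard
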